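/- arXiv:1906.04331 — 3 statements merged into one kernel-verified Lean document; each statement's English description precedes it below -/
import Mathlib

section
/- Prefix preservation across passes: let 1 ≤ t ≤ K. For every initial (gold) sequence y : Fin T → α and every prefix (z_1,…,z_t) ∈ α^t, the marginal probability of the event {the first t output tokens equal (z_1,…,z_t)} is the same under q^{K+1}_y as under q^K_y; consequently it is the same under q^{K'}_y for every K' ≥ K. -/
open scoped ENNReal BigOperators

noncomputable section

variable {α : Type*}

/-- The list of tokens of `w` strictly before position `t` (0-indexed),
i.e. the prefix `(w_1, …, w_{t-1})` in 1-indexed notation. -/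
def prefList {n : ℕ} (w : Fin n → α) (t : Fin n) : List α :=
  List.ofFn (fun s : Fin (t : ℕ) => w ⟨(s : ℕ), s.2.trans t.2⟩)

/-- The sample-decoding probability of the sequence `z`:
`P_T(z) = ∏_{t=1}^T μ(z_1,…,z_{t-1})(z_t)`. -/
def sampleDecodeProb {T : ℕ} (μ : List α → PMF α) (z : Fin T → α) : ℝ≥0∞ :=
  ∏ t : Fin T, μ (prefList z t) (z t)

/-- The pass kernel `Q_k` (mixing probability `p = 1`): given input sequence `w`,
positions `t < k` (1-indexed) are copied from `w` deterministically, and each position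
`t ≥ k` is drawn independently from `μ(w_1,…,w_{t-1})`. -/
def passKernel [Fintype α] [DecidableEq α] {T : ℕ}
    (μ : List α → PMF α) (k : ℕ) (w : Fin T → α) : PMF (Fin T → α) :=
  PMF.ofFintype
    (fun z => ∏ t : Fin T,
      if (t : ℕ) + 1 < k then (if z t = w t then 1 else 0)
      else μ (prefList w t) (z t))
    (by
      classical
      have h : ∀ t : Fin T,
          (∑ a : α, if (t : ℕ) + 1 < k then (if a = w t then (1 : ℝ≥0∞) else 0)
            else μ (prefList w t) a) = 1 := by
        intro t
        split
        · simp
        · rw [← tsum_fintype (L := SummationFilter.unconditional α)]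
          exact (μ (prefList w t)).tsum_coe
      calc
        (∑ z : Fin T → α, ∏ t : Fin T,
            if (t : ℕ) + 1 < k then (if z t = w t then (1 : ℝ≥0∞) else 0)
            else μ (prefList w t) (z t))
            = ∏ t : Fin T, ∑ a : α,
                (if (t : ℕ) + 1 < k then (if a = w t then (1 : ℝ≥0∞) else 0)
                  else μ (prefList w t) a) := by
              rw [Finset.prod_univ_sum]
              rw [Fintype.piFinset_univ]
        _ = 1 := by
              rw [Finset.prod_congr rfl (fun t _ => h t)]
              simp)

/-- The Parallel Scheduled Sampling proposal distribution with mixing probability `p = 1`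
after `K` passes, starting from the gold sequence `y`: the kernels `Q_1, …, Q_K` applied
in succession to the point mass at `y`. -/
def pssProposal [Fintype α] [DecidableEq α] {T : ℕ}
    (μ : List α → PMF α) (y : Fin T → α) : ℕ → PMF (Fin T → α)
  | 0 => PMF.pure y
  | k + 1 => (pssProposal μ y k).bind (passKernel μ (k + 1))

/-- The probability, under the distribution `q` on sequences, of the event that the
first `t` output tokens equal the prefix `z : Fin t → α`. -/
def prefixProb {T t : ℕ} (q : PMF (Fin T → α)) (z : Fin t → α) : ℝ≥0∞ :=
  q.toOuterMeasure {w | ∀ s : Fin T, (h : (s : ℕ) < t) → w s = z ⟨(s : ℕ), h⟩}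

-- auxiliary
lemma indicator_eq_prod [DecidableEq α] {T t : ℕ} (z : Fin t → α) (x : Fin T → α) :
    ({w : Fin T → α | ∀ s : Fin T, (h : (s : ℕ) < t) → w s = z ⟨(s : ℕ), h⟩}.indicator
      (fun _ => (1 : ℝ≥0∞)) x) =
    ∏ s : Fin T, (if h : (s : ℕ) < t then (if x s = z ⟨(s : ℕ), h⟩ then 1 else 0) else 1) := by
  classical
  by_cases hx : x ∈ {w : Fin T → α | ∀ s : Fin T, (h : (s : ℕ) < t) → w s = z ⟨(s : ℕ), h⟩}
  · rw [Set.indicator_of_mem hx]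
    rw [eq_comm]
    apply Finset.prod_eq_one
    intro s _
    by_cases h : (s : ℕ) < t
    · simp [h, hx s h]
    · simp [h]
  · rw [Set.indicator_of_notMem hx]
    simp only [Set.mem_setOf_eq, not_forall] at hx
    obtain ⟨s, h, hne⟩ := hx
    rw [eq_comm]
    apply Finset.prod_eq_zero (Finset.mem_univ s)
    simp [h, hne]

lemma passKernel_prefixProb [Fintype α] [DecidableEq α] {T t : ℕ}
    (μ : List α → PMF α) {k : ℕ} (hk : t ≤ k) (w : Fin T → α) (z : Fin t → α) :
    prefixProb (passKernel μ (k + 1) w) z =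
      ({w : Fin T → α | ∀ s : Fin T, (h : (s : ℕ) < t) → w s = z ⟨(s : ℕ), h⟩}.indicator
        (fun _ => (1 : ℝ≥0∞)) w) := by
  classical
  rw [prefixProb, PMF.toOuterMeasure_apply, tsum_fintype]
  have hKer : ∀ x : Fin T → α, passKernel μ (k + 1) w x =
      ∏ s : Fin T, (if (s : ℕ) + 1 < k + 1 then (if x s = w s then (1 : ℝ≥0∞) else 0)
        else μ (prefList w s) (x s)) := fun x => rfl
  have step1 : ∀ x : Fin T → α,
      ({w : Fin T → α | ∀ s : Fin T, (h : (s : ℕ) < t) → w s = z ⟨(s : ℕ), h⟩}.indicator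
        (passKernel μ (k + 1) w) x) =
      ∏ s : Fin T,
        ((if h : (s : ℕ) < t then (if x s = z ⟨(s : ℕ), h⟩ then 1 else 0) else 1) *
          (if (s : ℕ) + 1 < k + 1 then (if x s = w s then (1 : ℝ≥0∞) else 0)
            else μ (prefList w s) (x s))) := by
    intro x
    rw [Finset.prod_mul_distrib, ← indicator_eq_prod z x, ← hKer]
    rw [Set.indicator_apply, Set.indicator_apply]
    split <;> simp
  rw [Finset.sum_congr rfl (fun x _ => step1 x)]
  rw [← Fintype.piFinset_univ,
    ← Finset.prod_univ_sum (t := fun _ : Fin T => (Finset.univ : Finset α))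
      (f := fun (s : Fin T) (a : α) =>
        (if h : (s : ℕ) < t then (if a = z ⟨(s : ℕ), h⟩ then 1 else 0) else 1) *
          (if (s : ℕ) + 1 < k + 1 then (if a = w s then (1 : ℝ≥0∞) else 0)
            else μ (prefList w s) a))]
  rw [indicator_eq_prod z w]
  apply Finset.prod_congr rfl
  intro s _
  by_cases h : (s : ℕ) < t
  · have h1 : (s : ℕ) + 1 < k + 1 := Nat.succ_lt_succ (lt_of_lt_of_le h hk)
    simp only [h, h1, dif_pos, if_pos]
    rw [Finset.sum_eq_single (z ⟨(s : ℕ), h⟩)]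
    · simp [eq_comm]
    · intro b _ hb; simp [hb]
    · intro hmem; exact absurd (Finset.mem_univ _) hmem
  · simp only [h, dif_neg, not_false_iff, one_mul]
    by_cases h2 : (s : ℕ) + 1 < k + 1
    · simp [h2]
    · simp only [h2, if_neg, not_false_iff]
      rw [← tsum_fintype (L := SummationFilter.unconditional α)]
      exact (μ (prefList w s)).tsum_coe

lemma bind_passKernel_prefixProb [Fintype α] [DecidableEq α] {T t : ℕ}
    (μ : List α → PMF α) {k : ℕ} (hk : t ≤ k) (q : PMF (Fin T → α)) (z : Fin t → α) :
    prefixProb (q.bind (passKernel μ (k + 1))) z = prefixProb q z := by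
  classical
  rw [prefixProb, PMF.toOuterMeasure_bind_apply]
  have h1 : ∀ a : Fin T → α,
      q a * (passKernel μ (k + 1) a).toOuterMeasure
        {w : Fin T → α | ∀ s : Fin T, (h : (s : ℕ) < t) → w s = z ⟨(s : ℕ), h⟩} =
      {w : Fin T → α | ∀ s : Fin T, (h : (s : ℕ) < t) → w s = z ⟨(s : ℕ), h⟩}.indicator q a := by
    intro a
    have := passKernel_prefixProb μ hk a z
    rw [prefixProb] at this
    rw [this, Set.indicator_apply, Set.indicator_apply]
    split <;> simp
  rw [tsum_congr h1, prefixProb, PMF.toOuterMeasure_apply]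


/-- Prefix preservation across passes: for `1 ≤ t ≤ K`, the marginal
probability that the first `t` output tokens equal a given prefix `z` is the same under
`q^{K+1}_y` as under `q^K_y`, and consequently the same under `q^{K'}_y` for all `K' ≥ K`. -/
theorem pss_prefix_preserved [Fintype α] [DecidableEq α] [Nonempty α]
    {T t K : ℕ} (hT : 0 < T) (ht : 1 ≤ t) (htK : t ≤ K)
    (μ : List α → PMF α) (y : Fin T → α) (z : Fin t → α) :
    prefixProb (pssProposal μ y (K + 1)) z = prefixProb (pssProposal μ y K) z ∧
    ∀ K', K ≤ K' → prefixProb (pssProposal μ y K') z = prefixProb (pssProposal μ y K) z := by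

  have key : ∀ k, t ≤ k →
      prefixProb (pssProposal μ y (k + 1)) z = prefixProb (pssProposal μ y k) z := by
    intro k hk
    show prefixProb ((pssProposal μ y k).bind (passKernel μ (k + 1))) z = _
    exact bind_passKernel_prefixProb μ hk _ z
  refine ⟨key K htK, ?_⟩
  intro K'
  induction K' with
  | zero => intro hK'; rw [Nat.le_zero.mp hK']
  | succ n ih =>
    intro hK'
    rcases Nat.lt_or_ge K (n + 1) with h | h
    · have hn : K ≤ n := Nat.lt_succ_iff.mp h
      rw [key n (le_trans htK hn), ih hn]
    · rw [le_antisymm hK' h]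

end
end

section
/- Factorization of the next-token marginal: let 1 ≤ t ≤ K and t + 1 ≤ T. For every initial (gold) sequence y : Fin T → α and every prefix (z_1,…,z_{t+1}) ∈ α^{t+1}, the q^{K+1}_y-marginal probability that the first t+1 output tokens equal (z_1,…,z_{t+1}) equals the q^K_y-marginal probability that the first t output tokens equal (z_1,…,z_t), multiplied by μ(z_1,…,z_t)(z_{t+1}). -/
open scoped ENNReal BigOperators

noncomputable section

variable {α : Type*}

set_option linter.unusedSectionVars false
set_option linter.unusedVariables false

section Aux2
variable [Fintype α] [DecidableEq α]
/-- indicator of the prefix event as a product. -/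
lemma prefix_event_indicator {T u : ℕ} (z : Fin u → α) (v : Fin T → α) :
    Set.indicator {w : Fin T → α | ∀ s : Fin T, (h : (s : ℕ) < u) → w s = z ⟨(s : ℕ), h⟩}
      (fun _ => (1 : ℝ≥0∞)) v
    = ∏ s : Fin T, (if h : (s : ℕ) < u then (if v s = z ⟨(s : ℕ), h⟩ then 1 else 0) else 1) := by
  classical
  by_cases hv : v ∈ {w : Fin T → α | ∀ s : Fin T, (h : (s : ℕ) < u) → w s = z ⟨(s : ℕ), h⟩}
  · rw [Set.indicator_of_mem hv]
    symm
    apply Finset.prod_eq_one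
    intro s _
    split
    · next h => simp [hv s h]
    · rfl
  · rw [Set.indicator_of_notMem hv]
    symm
    simp only [Set.mem_setOf_eq, not_forall] at hv
    obtain ⟨s, h, hne⟩ := hv
    exact Finset.prod_eq_zero (Finset.mem_univ s) (by simp [h, hne])

lemma prefixProb_passKernel {T u : ℕ} (μ : List α → PMF α) (k : ℕ) (w : Fin T → α)
    (z : Fin u → α) :
    prefixProb (passKernel μ k w) z
      = ∏ s : Fin T, ∑ a : α,
          (if h : (s : ℕ) < u then (if a = z ⟨(s : ℕ), h⟩ then (1 : ℝ≥0∞) else 0) else 1) *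
          (if (s : ℕ) + 1 < k then (if a = w s then 1 else 0) else μ (prefList w s) a) := by
  classical
  rw [prefixProb, PMF.toOuterMeasure_apply, tsum_fintype]
  have hpt : ∀ v : Fin T → α,
      Set.indicator {w : Fin T → α | ∀ s : Fin T, (h : (s : ℕ) < u) → w s = z ⟨(s : ℕ), h⟩}
        (passKernel μ k w) v
      = ∏ s : Fin T,
          ((if h : (s : ℕ) < u then (if v s = z ⟨(s : ℕ), h⟩ then (1:ℝ≥0∞) else 0) else 1) *
           (if (s : ℕ) + 1 < k then (if v s = w s then 1 else 0) else μ (prefList w s) (v s))) := by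
    intro v
    have : Set.indicator {w : Fin T → α | ∀ s : Fin T, (h : (s : ℕ) < u) → w s = z ⟨(s : ℕ), h⟩}
        (passKernel μ k w) v
      = Set.indicator {w : Fin T → α | ∀ s : Fin T, (h : (s : ℕ) < u) → w s = z ⟨(s : ℕ), h⟩}
        (fun _ => (1:ℝ≥0∞)) v * passKernel μ k w v := by
      by_cases hv : v ∈ {w : Fin T → α | ∀ s : Fin T, (h : (s : ℕ) < u) → w s = z ⟨(s : ℕ), h⟩}
      · rw [Set.indicator_of_mem hv, Set.indicator_of_mem hv, one_mul]
      · rw [Set.indicator_of_notMem hv, Set.indicator_of_notMem hv, zero_mul]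
    rw [this, prefix_event_indicator]
    have hker : passKernel μ k w v = ∏ s : Fin T,
        (if (s : ℕ) + 1 < k then (if v s = w s then (1:ℝ≥0∞) else 0)
          else μ (prefList w s) (v s)) := by
      simp [passKernel, PMF.ofFintype_apply]
    rw [hker, ← Finset.prod_mul_distrib]
  rw [Finset.sum_congr rfl (fun v _ => hpt v)]
  rw [Finset.prod_univ_sum, Fintype.piFinset_univ]

/-- Factor values. -/
lemma factor_ge (μ : List α → PMF α) {T u : ℕ} (k : ℕ) (w : Fin T → α) (z : Fin u → α)
    (s : Fin T) (hs : ¬ (s : ℕ) < u) :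
    (∑ a : α,
      (if h : (s : ℕ) < u then (if a = z ⟨(s : ℕ), h⟩ then (1:ℝ≥0∞) else 0) else 1) *
      (if (s : ℕ) + 1 < k then (if a = w s then 1 else 0) else μ (prefList w s) a)) = 1 := by
  classical
  simp only [dif_neg hs, one_mul]
  split
  · simp
  · rw [← tsum_fintype (L := SummationFilter.unconditional α)]; exact (μ (prefList w s)).tsum_coe

lemma factor_copy (μ : List α → PMF α) {T u : ℕ} (k : ℕ) (w : Fin T → α) (z : Fin u → α)
    (s : Fin T) (hs : (s : ℕ) < u) (hk : (s : ℕ) + 1 < k) :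
    (∑ a : α,
      (if h : (s : ℕ) < u then (if a = z ⟨(s : ℕ), h⟩ then (1:ℝ≥0∞) else 0) else 1) *
      (if (s : ℕ) + 1 < k then (if a = w s then 1 else 0) else μ (prefList w s) a))
    = (if w s = z ⟨(s : ℕ), hs⟩ then 1 else 0) := by
  classical
  simp only [dif_pos hs, if_pos hk]
  rw [Finset.sum_eq_single (w s)]
  · by_cases h : w s = z ⟨(s : ℕ), hs⟩ <;> simp [h]
  · intro b _ hb; simp [hb]
  · simp

lemma factor_sample (μ : List α → PMF α) {T u : ℕ} (k : ℕ) (w : Fin T → α) (z : Fin u → α)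
    (s : Fin T) (hs : (s : ℕ) < u) (hk : ¬ (s : ℕ) + 1 < k) :
    (∑ a : α,
      (if h : (s : ℕ) < u then (if a = z ⟨(s : ℕ), h⟩ then (1:ℝ≥0∞) else 0) else 1) *
      (if (s : ℕ) + 1 < k then (if a = w s then 1 else 0) else μ (prefList w s) a))
    = μ (prefList w s) (z ⟨(s : ℕ), hs⟩) := by
  classical
  simp only [dif_pos hs, if_neg hk]
  rw [Finset.sum_eq_single (z ⟨(s : ℕ), hs⟩)]
  · simp
  · intro b _ hb; simp [hb]
  · simp

/-- Lemma A: a later pass preserves a short prefix probability. -/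
lemma prefixProb_bind_passKernel_of_lt {T u : ℕ} (μ : List α → PMF α) {k : ℕ} (hu : u < k)
    (q : PMF (Fin T → α)) (z : Fin u → α) :
    prefixProb (q.bind (passKernel μ k)) z = prefixProb q z := by
  classical
  rw [prefixProb, PMF.toOuterMeasure_bind_apply]
  have hw : ∀ w : Fin T → α, (passKernel μ k w).toOuterMeasure
      {v : Fin T → α | ∀ s : Fin T, (h : (s : ℕ) < u) → v s = z ⟨(s : ℕ), h⟩}
      = Set.indicator {v : Fin T → α | ∀ s : Fin T, (h : (s : ℕ) < u) → v s = z ⟨(s : ℕ), h⟩}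
          (fun _ => (1:ℝ≥0∞)) w := by
    intro w
    rw [show ((passKernel μ k w).toOuterMeasure
        {v : Fin T → α | ∀ s : Fin T, (h : (s : ℕ) < u) → v s = z ⟨(s : ℕ), h⟩})
      = prefixProb (passKernel μ k w) z from rfl]
    rw [prefixProb_passKernel, prefix_event_indicator]
    apply Finset.prod_congr rfl
    intro s _
    by_cases hs : (s : ℕ) < u
    · rw [factor_copy μ k w z s hs (by omega), dif_pos hs]
    · rw [factor_ge μ k w z s hs, dif_neg hs]
  rw [tsum_congr (fun w => by rw [hw w])]
  rw [prefixProb, PMF.toOuterMeasure_apply]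
  apply tsum_congr
  intro w
  by_cases hv : w ∈ {v : Fin T → α | ∀ s : Fin T, (h : (s : ℕ) < u) → v s = z ⟨(s : ℕ), h⟩}
  · rw [Set.indicator_of_mem hv, Set.indicator_of_mem hv, mul_one]
  · rw [Set.indicator_of_notMem hv, Set.indicator_of_notMem hv, mul_zero]

/-- Lemma B: the factorization at the critical pass `t+1`. -/
lemma prefixProb_bind_passKernel_succ {T t : ℕ} (μ : List α → PMF α) (htT : t + 1 ≤ T)
    (q : PMF (Fin T → α)) (z : Fin (t + 1) → α) :
    prefixProb (q.bind (passKernel μ (t + 1))) z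
      = prefixProb q (fun s : Fin t => z s.castSucc)
        * μ (List.ofFn (fun s : Fin t => z s.castSucc)) (z (Fin.last t)) := by
  classical
  have htT' : t < T := htT
  set E : Set (Fin T → α) :=
    {v : Fin T → α | ∀ s : Fin T, (h : (s : ℕ) < t) →
      v s = (fun s : Fin t => z s.castSucc) ⟨(s : ℕ), h⟩} with hE
  rw [prefixProb, PMF.toOuterMeasure_bind_apply]
  have hw : ∀ w : Fin T → α, (passKernel μ (t + 1) w).toOuterMeasure
      {v : Fin T → α | ∀ s : Fin T, (h : (s : ℕ) < t + 1) → v s = z ⟨(s : ℕ), h⟩}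
      = Set.indicator E (fun _ => (1:ℝ≥0∞)) w
          * μ (prefList w ⟨t, htT'⟩) (z (Fin.last t)) := by
    intro w
    rw [show ((passKernel μ (t+1) w).toOuterMeasure
        {v : Fin T → α | ∀ s : Fin T, (h : (s : ℕ) < t + 1) → v s = z ⟨(s : ℕ), h⟩})
      = prefixProb (passKernel μ (t+1) w) z from rfl]
    rw [prefixProb_passKernel]
    rw [prefix_event_indicator (fun s : Fin t => z s.castSucc) w]
    -- split off the s = t factor
    have key : ∀ s : Fin T,
        (∑ a : α,
          (if h : (s : ℕ) < t + 1 then (if a = z ⟨(s : ℕ), h⟩ then (1:ℝ≥0∞) else 0) else 1) *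
          (if (s : ℕ) + 1 < t + 1 then (if a = w s then 1 else 0)
            else μ (prefList w s) a))
        = (if h : (s : ℕ) < t then (if w s = z (⟨(s:ℕ), h⟩ : Fin t).castSucc then 1 else 0) else 1)
          * (if (s : ℕ) = t then μ (prefList w s) (z (Fin.last t)) else 1) := by
      intro s
      by_cases hst : (s : ℕ) < t
      · rw [factor_copy μ (t+1) w z s (by omega) (by omega)]
        rw [dif_pos hst, if_neg (show ¬ ((s : ℕ) = t) by omega), mul_one]
        rfl
      · by_cases hseq : (s : ℕ) = t
        · rw [factor_sample μ (t+1) w z s (by omega) (by omega)]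
          rw [dif_neg hst, if_pos hseq, one_mul]
          congr 1
          exact congrArg z (Fin.ext hseq)
        · rw [factor_ge μ (t+1) w z s (by omega)]
          rw [dif_neg hst, if_neg hseq, one_mul]
    rw [Finset.prod_congr rfl (fun s _ => key s), Finset.prod_mul_distrib]
    have h2 : (∏ s : Fin T, if (s : ℕ) = t then μ (prefList w s) (z (Fin.last t)) else 1)
        = μ (prefList w ⟨t, htT'⟩) (z (Fin.last t)) := by
      rw [Finset.prod_eq_single (⟨t, htT'⟩ : Fin T)]
      · rw [if_pos rfl]
      · intro b _ hb
        rw [if_neg (fun h => hb (Fin.ext h))]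
      · simp
    rw [h2]
  rw [tsum_congr (fun w => by rw [hw w])]
  have hpt : ∀ w : Fin T → α,
      q w * (Set.indicator E (fun _ => (1:ℝ≥0∞)) w * μ (prefList w ⟨t, htT'⟩) (z (Fin.last t)))
      = Set.indicator E q w * μ (List.ofFn (fun s : Fin t => z s.castSucc)) (z (Fin.last t)) := by
    intro w
    by_cases hv : w ∈ E
    · rw [Set.indicator_of_mem hv, Set.indicator_of_mem hv, one_mul]
      have hpl : prefList w ⟨t, htT'⟩ = List.ofFn (fun s : Fin t => z s.castSucc) := by
        rw [prefList]
        exact congrArg List.ofFn (funext fun s : Fin t => hv ⟨(s : ℕ), s.2.trans htT'⟩ s.2)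
      rw [hpl]
    · rw [Set.indicator_of_notMem hv, Set.indicator_of_notMem hv]
      simp
  rw [tsum_congr hpt, ENNReal.tsum_mul_right]
  congr 1
  rw [prefixProb, PMF.toOuterMeasure_apply]

lemma prefixProb_pss_stable {T u : ℕ} (μ : List α → PMF α) (y : Fin T → α)
    (z : Fin u → α) : ∀ m, u ≤ m →
    prefixProb (pssProposal μ y m) z = prefixProb (pssProposal μ y u) z := by
  intro m
  induction m with
  | zero => intro h; have : u = 0 := Nat.le_zero.mp h; subst this; rfl
  | succ n ih =>
    intro h
    rcases Nat.lt_or_ge u (n + 1) with h' | h'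
    · rw [show pssProposal μ y (n+1) = (pssProposal μ y n).bind (passKernel μ (n+1)) from rfl]
      rw [prefixProb_bind_passKernel_of_lt μ (by omega) _ z]
      exact ih (by omega)
    · have : u = n + 1 := by omega
      subst this; rfl
end Aux2

/-- Factorization of the next-token marginal: for `1 ≤ t ≤ K` and
`t + 1 ≤ T`, the `q^{K+1}_y`-marginal probability of the prefix `(z_1,…,z_{t+1})` equals
the `q^K_y`-marginal probability of `(z_1,…,z_t)` times `μ(z_1,…,z_t)(z_{t+1})`. -/
theorem pss_next_token_factorization [Fintype α] [DecidableEq α] [Nonempty α]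
    {T t K : ℕ} (hT : 0 < T) (ht : 1 ≤ t) (htK : t ≤ K) (htT : t + 1 ≤ T)
    (μ : List α → PMF α) (y : Fin T → α) (z : Fin (t + 1) → α) :
    prefixProb (pssProposal μ y (K + 1)) z
      = prefixProb (pssProposal μ y K) (fun s : Fin t => z s.castSucc)
        * μ (List.ofFn (fun s : Fin t => z s.castSucc)) (z (Fin.last t)) := by
  rw [prefixProb_pss_stable μ y z (K + 1) (by omega)]
  rw [show pssProposal μ y (t + 1) = (pssProposal μ y t).bind (passKernel μ (t + 1)) from rfl]
  rw [prefixProb_bind_passKernel_succ μ htT]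
  rw [prefixProb_pss_stable μ y (fun s : Fin t => z s.castSucc) K (by omega)]

end
end

section
/- Independence from the gold sequence: let K ≥ T ≥ 1. For any two initial (gold) sequences y, y' : Fin T → α, the Parallel Scheduled Sampling proposal distributions with mixing probability p = 1 after K passes coincide: q^K_y = q^K_{y'} as distributions on sequences z : Fin T → α. -/
open scoped ENNReal BigOperators

noncomputable section

variable {α : Type*}

lemma prefList_congr {n : ℕ} {w v : Fin n → α} {t : Fin n}
    (h : ∀ s : Fin n, (s : ℕ) < (t : ℕ) → w s = v s) : prefList w t = prefList v t :=
  congrArg List.ofFn (funext fun s => h ⟨(s : ℕ), s.2.trans t.2⟩ s.2)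

lemma pss_marginal [Fintype α] [DecidableEq α] {T : ℕ}
    (μ : List α → PMF α) (y : Fin T → α) (k : ℕ) :
    ∀ z : Fin T → α,
      (∑ w : Fin T → α, if (∀ t : Fin T, (t : ℕ) < k → w t = z t)
          then pssProposal μ y k w else 0)
        = ∏ t : Fin T, if (t : ℕ) < k then μ (prefList z t) (z t) else 1 := by
  classical
  induction k with
  | zero =>
    intro z
    have h0 : ∀ w : Fin T → α,
        (if (∀ t : Fin T, (t : ℕ) < 0 → w t = z t) then pssProposal μ y 0 w else 0)
          = pssProposal μ y 0 w := fun w => if_pos (fun t ht => absurd ht (by omega))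
    rw [Finset.sum_congr rfl fun w _ => h0 w]
    have : (∑ w : Fin T → α, pssProposal μ y 0 w) = 1 := by
      rw [← tsum_fintype (L := SummationFilter.unconditional (Fin T → α))]; exact (pssProposal μ y 0).tsum_coe
    rw [this]
    exact (Finset.prod_eq_one fun t _ => if_neg (by omega)).symm
  | succ k ih =>
    intro z
    -- abbreviations
    set Pk := pssProposal μ y k with hPk
    have hbind : ∀ w : Fin T → α,
        pssProposal μ y (k + 1) w
          = ∑ v : Fin T → α, Pk v * passKernel μ (k + 1) v w := by
      intro w
      rw [pssProposal, PMF.bind_apply, tsum_fintype]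
    -- the per-coordinate factor after merging the prefix-indicator and the kernel
    have key : ∀ v : Fin T → α,
        (∑ w : Fin T → α, if (∀ t : Fin T, (t : ℕ) < k + 1 → w t = z t)
            then passKernel μ (k + 1) v w else 0)
          = if (∀ t : Fin T, (t : ℕ) < k → v t = z t)
              then (∏ t : Fin T, if (t : ℕ) = k then μ (prefList z t) (z t) else 1)
              else 0 := by
      intro v
      have hker : ∀ w : Fin T → α,
          passKernel μ (k + 1) v w = ∏ t : Fin T,
            (if (t : ℕ) + 1 < k + 1 then (if w t = v t then (1 : ℝ≥0∞) else 0)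
              else μ (prefList v t) (w t)) := fun w => by
        rw [passKernel, PMF.ofFintype_apply]
      have step1 : ∀ w : Fin T → α,
          (if (∀ t : Fin T, (t : ℕ) < k + 1 → w t = z t)
              then passKernel μ (k + 1) v w else 0)
            = ∏ t : Fin T,
                ((if (t : ℕ) < k + 1 then (if w t = z t then (1 : ℝ≥0∞) else 0) else 1)
                  * (if (t : ℕ) + 1 < k + 1 then (if w t = v t then (1 : ℝ≥0∞) else 0)
                      else μ (prefList v t) (w t))) := by
        intro w
        rw [Finset.prod_mul_distrib, ← hker]
        by_cases hc : ∀ t : Fin T, (t : ℕ) < k + 1 → w t = z t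
        · rw [if_pos hc]
          have : (∏ t : Fin T, (if (t : ℕ) < k + 1
              then (if w t = z t then (1 : ℝ≥0∞) else 0) else 1)) = 1 := by
            apply Finset.prod_eq_one
            intro t _
            split
            · next h => simp [hc t h]
            · rfl
          rw [this, one_mul]
        · rw [if_neg hc]
          push_neg at hc
          obtain ⟨t0, ht0, hne⟩ := hc
          have : (∏ t : Fin T, (if (t : ℕ) < k + 1
              then (if w t = z t then (1 : ℝ≥0∞) else 0) else 1)) = 0 := by
            apply Finset.prod_eq_zero (Finset.mem_univ t0)
            simp [ht0, hne]
          rw [this, zero_mul]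
      rw [Finset.sum_congr rfl fun w _ => step1 w]
      have swap : (∑ w : Fin T → α, ∏ t : Fin T,
            ((if (t : ℕ) < k + 1 then (if w t = z t then (1 : ℝ≥0∞) else 0) else 1)
              * (if (t : ℕ) + 1 < k + 1 then (if w t = v t then (1 : ℝ≥0∞) else 0)
                  else μ (prefList v t) (w t))))
          = ∏ t : Fin T, ∑ a : α,
            ((if (t : ℕ) < k + 1 then (if a = z t then (1 : ℝ≥0∞) else 0) else 1)
              * (if (t : ℕ) + 1 < k + 1 then (if a = v t then (1 : ℝ≥0∞) else 0)
                  else μ (prefList v t) a)) := by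
        rw [Finset.prod_univ_sum, Fintype.piFinset_univ]
      rw [swap]
      -- now evaluate the per-coordinate sums
      have percoord : ∀ t : Fin T,
          (∑ a : α, ((if (t : ℕ) < k + 1 then (if a = z t then (1 : ℝ≥0∞) else 0) else 1)
              * (if (t : ℕ) + 1 < k + 1 then (if a = v t then (1 : ℝ≥0∞) else 0)
                  else μ (prefList v t) a)))
            = if (t : ℕ) < k then (if z t = v t then 1 else 0)
              else if (t : ℕ) = k then μ (prefList v t) (z t) else 1 := by
        intro t
        rcases lt_trichotomy (t : ℕ) k with h | h | h
        · have h1 : (t : ℕ) < k + 1 := by omega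
          have h2 : (t : ℕ) + 1 < k + 1 := by omega
          simp only [if_pos h1, if_pos h2, if_pos h, ite_mul, one_mul, zero_mul,
            Finset.sum_ite_eq' Finset.univ (z t)]
          simp
        · have h1 : (t : ℕ) < k + 1 := by omega
          have h2 : ¬ (t : ℕ) + 1 < k + 1 := by omega
          simp only [if_pos h1, if_neg h2, if_neg (by omega : ¬ (t:ℕ) < k), if_pos h,
            ite_mul, one_mul, zero_mul, Finset.sum_ite_eq' Finset.univ (z t)]
          simp
        · have h1 : ¬ (t : ℕ) < k + 1 := by omega
          have h2 : ¬ (t : ℕ) + 1 < k + 1 := by omega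
          simp only [if_neg h1, if_neg h2, if_neg (by omega : ¬ (t:ℕ) < k),
            if_neg (by omega : ¬ (t:ℕ) = k), one_mul]
          rw [← tsum_fintype (L := SummationFilter.unconditional α)]
          exact (μ (prefList v t)).tsum_coe
      rw [Finset.prod_congr rfl fun t _ => percoord t]
      by_cases hv : ∀ t : Fin T, (t : ℕ) < k → v t = z t
      · rw [if_pos hv]
        apply Finset.prod_congr rfl
        intro t _
        rcases lt_trichotomy (t : ℕ) k with h | h | h
        · rw [if_pos h, if_pos (hv t h).symm, if_neg (by omega : ¬ (t:ℕ) = k)]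
        · rw [if_neg (by omega : ¬ (t:ℕ) < k), if_pos h, if_pos h]
          congr 1
          exact congrArg μ (prefList_congr fun s hs => hv s (h ▸ hs))
        · rw [if_neg (by omega : ¬ (t:ℕ) < k), if_neg (by omega : ¬ (t:ℕ) = k),
            if_neg (by omega : ¬ (t:ℕ) = k)]
      · rw [if_neg hv]
        push_neg at hv
        obtain ⟨t0, ht0, hne⟩ := hv
        apply Finset.prod_eq_zero (Finset.mem_univ t0)
        rw [if_pos ht0, if_neg (fun h => hne h.symm)]
    calc
      (∑ w : Fin T → α, if (∀ t : Fin T, (t : ℕ) < k + 1 → w t = z t)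
          then pssProposal μ y (k + 1) w else 0)
        = ∑ w : Fin T → α, ∑ v : Fin T → α,
            (Pk v * if (∀ t : Fin T, (t : ℕ) < k + 1 → w t = z t)
              then passKernel μ (k + 1) v w else 0) := by
          apply Finset.sum_congr rfl
          intro w _
          split
          · rw [hbind w]
          · simp
      _ = ∑ v : Fin T → α, Pk v *
            ∑ w : Fin T → α, (if (∀ t : Fin T, (t : ℕ) < k + 1 → w t = z t)
              then passKernel μ (k + 1) v w else 0) := by
          rw [Finset.sum_comm]
          exact Finset.sum_congr rfl fun v _ => (Finset.mul_sum _ _ _).symm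
      _ = ∑ v : Fin T → α, (if (∀ t : Fin T, (t : ℕ) < k → v t = z t)
              then Pk v else 0)
            * (∏ t : Fin T, if (t : ℕ) = k then μ (prefList z t) (z t) else 1) := by
          apply Finset.sum_congr rfl
          intro v _
          rw [key v]
          split <;> simp [mul_comm]
      _ = (∏ t : Fin T, if (t : ℕ) < k then μ (prefList z t) (z t) else 1)
            * (∏ t : Fin T, if (t : ℕ) = k then μ (prefList z t) (z t) else 1) := by
          rw [← Finset.sum_mul, ih z]
      _ = ∏ t : Fin T, if (t : ℕ) < k + 1 then μ (prefList z t) (z t) else 1 := by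
          rw [← Finset.prod_mul_distrib]
          apply Finset.prod_congr rfl
          intro t _
          rcases lt_trichotomy (t : ℕ) k with h | h | h
          · rw [if_pos h, if_neg (by omega : ¬ (t:ℕ) = k), if_pos (by omega), mul_one]
          · rw [if_neg (by omega : ¬ (t:ℕ) < k), if_pos h, if_pos (by omega), one_mul]
          · rw [if_neg (by omega : ¬ (t:ℕ) < k), if_neg (by omega : ¬ (t:ℕ) = k),
              if_neg (by omega), mul_one]
/-- Independence from the gold sequence: for `K ≥ T ≥ 1`, the Parallel
Scheduled Sampling proposal distributions with mixing probability `p = 1` after `K`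
passes started from any two gold sequences `y, y'` coincide. -/
theorem pss_gold_independent [Fintype α] [DecidableEq α] [Nonempty α]
    {T K : ℕ} (hT : 1 ≤ T) (hK : T ≤ K)
    (μ : List α → PMF α) (y y' : Fin T → α) :
    pssProposal μ y K = pssProposal μ y' K := by
  classical
  apply PMF.ext
  intro z
  have hcond : ∀ w : Fin T → α,
      (∀ t : Fin T, (t : ℕ) < K → w t = z t) ↔ w = z := fun w =>
    ⟨fun h => funext fun t => h t (lt_of_lt_of_le t.2 hK), fun h t _ => by rw [h]⟩
  have collapse : ∀ x : Fin T → α,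
      (∑ w : Fin T → α, if (∀ t : Fin T, (t : ℕ) < K → w t = z t)
          then pssProposal μ x K w else 0) = pssProposal μ x K z := by
    intro x
    rw [Finset.sum_congr rfl fun w _ => if_congr (hcond w) rfl rfl,
      Finset.sum_ite_eq' Finset.univ z]
    exact if_pos (Finset.mem_univ z)
  have h1 := pss_marginal μ y K z
  have h2 := pss_marginal μ y' K z
  rw [collapse y] at h1
  rw [collapse y'] at h2
  rw [h1, h2]

end
end
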